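/- arXiv:2412.16564 — 3 statements merged into one kernel-verified Lean document; each statement's English description precedes it below -/
import Mathlib

section
/- Let i ≥ 1, τ > 0, t ∈ ℝ, and let ξ : ℝ → ℝ be (i+1)-times continuously differentiable on the interval [t − iτ, t]. Then there exist points r_1, …, r_i with r_j ∈ (t − jτ, t) for each j ∈ {1, …, i} such that ∇^i_τ ξ(t) − ξ^{(i)}(t) = (τ / (i+1)!) · Σ_{j=1}^{i} (−1)^j · (i choose j) · (−j)^{i+1} · ξ^{(i+1)}(r_j). -/
open Set Finset
open scoped Nat

/-- Alternating sum `∑ (-1)^j C(i,j) j^k`. -/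
noncomputable def altS (i k : ℕ) : ℝ :=
  ∑ j ∈ Finset.range (i + 1), (-1 : ℝ) ^ j * (i.choose j : ℝ) * (j : ℝ) ^ k

lemma altS_rec (i k : ℕ) :
    altS (i + 1) k = -∑ m ∈ Finset.range k, (k.choose m : ℝ) * altS i m := by
  have hB : ∑ j ∈ Finset.range (i + 1), (-1:ℝ)^(j+1) * (i.choose (j+1) : ℝ) * ((j:ℝ)+1)^k
      = altS i k - (0:ℝ)^k := by
    rw [Finset.sum_range_succ, Nat.choose_succ_self]
    rw [altS, Finset.sum_range_succ']
    push_cast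
    simp
  have hA : ∑ j ∈ Finset.range (i + 1), (-1:ℝ)^(j+1) * (i.choose j : ℝ) * ((j:ℝ)+1)^k
      = -∑ m ∈ Finset.range (k+1), (k.choose m : ℝ) * altS i m := by
    have key : ∀ j : ℕ, ((j : ℝ) + 1) ^ k = ∑ m ∈ Finset.range (k + 1),
        (k.choose m : ℝ) * (j : ℝ) ^ m := by
      intro j
      rw [add_pow]
      exact Finset.sum_congr rfl fun m hm => by ring
    simp_rw [key, Finset.mul_sum, Finset.sum_comm (s := Finset.range (i+1))]
    rw [← Finset.sum_neg_distrib]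
    refine Finset.sum_congr rfl fun m hm => ?_
    rw [altS, Finset.mul_sum, ← Finset.sum_neg_distrib]
    refine Finset.sum_congr rfl fun j hj => ?_
    ring
  have h1 : altS (i + 1) k
      = (0:ℝ)^k
        + (∑ j ∈ Finset.range (i + 1), (-1:ℝ)^(j+1) * (i.choose j : ℝ) * ((j:ℝ)+1)^k
           + ∑ j ∈ Finset.range (i + 1), (-1:ℝ)^(j+1) * (i.choose (j+1) : ℝ) * ((j:ℝ)+1)^k) := by
    rw [altS, Finset.sum_range_succ', ← Finset.sum_add_distrib, add_comm]
    congr 1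
    · simp
    · refine Finset.sum_congr rfl fun j hj => ?_
      rw [Nat.choose_succ_succ]
      push_cast
      ring
  rw [h1, hA, hB, Finset.sum_range_succ, Nat.choose_self]
  push_cast
  ring

lemma altS_eq (i : ℕ) :
    (∀ k < i, altS i k = 0) ∧ altS i i = (-1:ℝ)^i * (i.factorial : ℝ) := by
  induction i with
  | zero =>
    constructor
    · intro k hk; omega
    · simp [altS]
  | succ n ih =>
    obtain ⟨ih0, ih1⟩ := ih
    have hlt : ∀ k < n + 1, altS (n+1) k = 0 := by
      intro k hk
      rw [altS_rec]
      rw [Finset.sum_eq_zero, neg_zero]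
      intro m hm
      rw [ih0 m (by simp at hm; omega), mul_zero]
    refine ⟨hlt, ?_⟩
    rw [altS_rec, Finset.sum_range_succ]
    rw [Finset.sum_eq_zero (fun m hm => by rw [ih0 m (by simp at hm; omega), mul_zero])]
    rw [ih1, Nat.choose_succ_self_right]
    push_cast [Nat.factorial_succ]
    ring

/-- Taylor's theorem with Lagrange remainder, expanding at the right endpoint. -/
theorem taylor_mean_remainder_lagrange_left {f : ℝ → ℝ} {x x₀ : ℝ} {n : ℕ} (hx : x < x₀)
    (hf : ContDiffOn ℝ n f (Icc x x₀))
    (hf' : DifferentiableOn ℝ (iteratedDerivWithin n f (Icc x x₀)) (Ioo x x₀)) :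
    ∃ x' ∈ Ioo x x₀, f x - taylorWithinEval f n (Icc x x₀) x₀ x =
      iteratedDerivWithin (n + 1) f (Icc x x₀) x' * (x - x₀) ^ (n + 1) / (n + 1)! := by
  have gcont : ContinuousOn (fun t : ℝ => (x - t) ^ (n + 1)) (Icc x x₀) := by fun_prop
  have xy_ne : ∀ y : ℝ, y ∈ Ioo x x₀ → (x - y) ^ n ≠ 0 := by
    intro y hy
    refine pow_ne_zero _ ?_
    rw [Set.mem_Ioo] at hy
    rw [sub_ne_zero]
    exact hy.1.ne
  rcases exists_ratio_hasDerivAt_eq_ratio_slope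
      (fun t => taylorWithinEval f n (Icc x x₀) t x)
      (fun t => ((n ! : ℝ)⁻¹ * (x - t) ^ n) • iteratedDerivWithin (n + 1) f (Icc x x₀) t) hx
      (continuousOn_taylorWithinEval (uniqueDiffOn_Icc hx) hf)
      (fun y hy => taylorWithinEval_hasDerivAt_Ioo x hx hy hf hf')
      (fun t : ℝ => (x - t) ^ (n + 1)) (fun t : ℝ => -(n + 1) * (x - t) ^ n) gcont
      (fun y _ => monomial_has_deriv_aux y x _) with ⟨y, hy, h⟩
  use y, hy
  simp only [sub_self, zero_pow, Ne, Nat.succ_ne_zero, not_false_iff, zero_sub,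
    taylorWithinEval_self, smul_eq_mul] at h
  have hn1 : ((n : ℝ) + 1) ≠ 0 := by positivity
  have hfac : (n ! : ℝ) ≠ 0 := by exact_mod_cast n.factorial_ne_zero
  rw [eq_div_iff (by exact_mod_cast (n+1).factorial_ne_zero)]
  have hxy := xy_ne y hy
  push_cast [Nat.factorial_succ]
  field_simp at h
  apply mul_right_cancel₀ hxy
  linear_combination (-h) * (x - y) ^ n

lemma iteratedDerivWithin_inter_nhds {f : ℝ → ℝ} {s u : Set ℝ} {x : ℝ} {n : ℕ}
    (hu : u ∈ nhds x) :
    iteratedDerivWithin n f (s ∩ u) x = iteratedDerivWithin n f s x := by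
  simp only [iteratedDerivWithin]
  rw [iteratedFDerivWithin_inter hu]

lemma bd_aux_step (i : ℕ) (τ : ℝ) (hτ : 0 < τ) (t : ℝ) (ξ : ℝ → ℝ)
    (hξ : ContDiffOn ℝ (i + 1) ξ (Set.Icc (t - i * τ) t)) (j : ℕ) (hj1 : 1 ≤ j) (hj2 : j ≤ i) :
    ∃ x' ∈ Set.Ioo (t - j * τ) t,
      ξ (t - j * τ) = taylorWithinEval ξ i (Set.Icc (t - i * τ) t) t (t - j * τ)
        + iteratedDerivWithin (i + 1) ξ (Set.Icc (t - i * τ) t) x' * (t - j * τ - t) ^ (i + 1)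
          / ((i + 1).factorial : ℝ) := by
  have hjR : (1:ℝ) ≤ (j:ℝ) := by exact_mod_cast hj1
  have hijR : (j:ℝ) ≤ (i:ℝ) := by exact_mod_cast hj2
  have hat : t - j * τ < t := by nlinarith
  have hsa : t - i * τ ≤ t - j * τ := by nlinarith
  have hsub : Icc (t - j * τ) t ⊆ Icc (t - i * τ) t := Set.Icc_subset_Icc_left hsa
  have hIcc : Icc (t - j * τ) t = Icc (t - i * τ) t ∩ Ici (t - j * τ) := by
    ext y
    simp only [Set.mem_Icc, Set.mem_inter_iff, Set.mem_Ici]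
    constructor
    · rintro ⟨h1, h2⟩; exact ⟨⟨by linarith, h2⟩, h1⟩
    · rintro ⟨⟨_, h2⟩, h3⟩; exact ⟨h3, h2⟩
  have hnh : Ici (t - j * τ) ∈ nhds t :=
    Filter.mem_of_superset (isOpen_Ioi.mem_nhds hat) Set.Ioi_subset_Ici_self
  have hDt : ∀ k : ℕ, iteratedDerivWithin k ξ (Icc (t - j * τ) t) t
      = iteratedDerivWithin k ξ (Icc (t - i * τ) t) t := fun k => by
    rw [hIcc]; exact iteratedDerivWithin_inter_nhds hnh
  have hTay : ∀ z, taylorWithinEval ξ i (Icc (t - j * τ) t) t z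
      = taylorWithinEval ξ i (Icc (t - i * τ) t) t z := fun z => by
    rw [taylor_within_apply, taylor_within_apply]
    exact Finset.sum_congr rfl fun k _ => by rw [hDt k]
  have hf : ContDiffOn ℝ i ξ (Icc (t - j * τ) t) := (hξ.mono hsub).of_le le_self_add
  have hf' : DifferentiableOn ℝ (iteratedDerivWithin i ξ (Icc (t - j * τ) t))
      (Ioo (t - j * τ) t) :=
    ((hξ.mono hsub).differentiableOn_iteratedDerivWithin (by exact_mod_cast Nat.lt_succ_self i)
      (uniqueDiffOn_Icc hat)).mono Set.Ioo_subset_Icc_self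
  obtain ⟨x', hx', heq⟩ := taylor_mean_remainder_lagrange_left hat hf hf'
  refine ⟨x', hx', ?_⟩
  have hIoo : Ioo (t - j * τ) t ∈ nhds x' := isOpen_Ioo.mem_nhds hx'
  have hDr : iteratedDerivWithin (i+1) ξ (Icc (t - j * τ) t) x'
      = iteratedDerivWithin (i+1) ξ (Icc (t - i * τ) t) x' := by
    calc iteratedDerivWithin (i+1) ξ (Icc (t - j * τ) t) x'
        = iteratedDerivWithin (i+1) ξ (Icc (t - j * τ) t ∩ Ioo (t - j * τ) t) x' :=
          (iteratedDerivWithin_inter_nhds hIoo).symm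
      _ = iteratedDerivWithin (i+1) ξ (Icc (t - i * τ) t ∩ Ioo (t - j * τ) t) x' := by
          rw [Set.inter_eq_self_of_subset_right Set.Ioo_subset_Icc_self,
            Set.inter_eq_self_of_subset_right (Set.Ioo_subset_Icc_self.trans hsub)]
      _ = iteratedDerivWithin (i+1) ξ (Icc (t - i * τ) t) x' :=
          iteratedDerivWithin_inter_nhds hIoo
  rw [hTay, hDr] at heq
  linarith



/-- The backward-difference approximation of the `i`-th derivative of `ξ` at `t`
with step size `τ`: `∇^i_τ ξ(t) = τ^{-i} · Σ_{j=0}^{i} (-1)^j (i choose j) ξ(t - jτ)`. -/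
noncomputable def bdApprox (ξ : ℝ → ℝ) (τ : ℝ) (i : ℕ) (t : ℝ) : ℝ :=
  τ ^ (-(i : ℤ)) *
    ∑ j ∈ Finset.range (i + 1), (-1 : ℝ) ^ j * (i.choose j : ℝ) * ξ (t - j * τ)

theorem bdApprox_error_lagrange_form (i : ℕ) (hi : 1 ≤ i) (τ : ℝ) (hτ : 0 < τ)
    (t : ℝ) (ξ : ℝ → ℝ)
    (hξ : ContDiffOn ℝ (i + 1) ξ (Set.Icc (t - i * τ) t)) :
    ∃ r : ℕ → ℝ,
      (∀ j ∈ Finset.Icc 1 i, r j ∈ Set.Ioo (t - j * τ) t) ∧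
      bdApprox ξ τ i t - iteratedDerivWithin i ξ (Set.Icc (t - i * τ) t) t
        = (τ / ((i + 1).factorial : ℝ)) *
            ∑ j ∈ Finset.Icc 1 i,
              (-1 : ℝ) ^ j * (i.choose j : ℝ) * (-(j : ℝ)) ^ (i + 1) *
                iteratedDerivWithin (i + 1) ξ (Set.Icc (t - i * τ) t) (r j) := by
  set s : Set ℝ := Set.Icc (t - i * τ) t with hs
  set D : ℝ → ℝ := iteratedDerivWithin (i + 1) ξ s with hD
  set d : ℕ → ℝ := fun k => iteratedDerivWithin k ξ s t with hd
  -- choose the intermediate points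
  have hex : ∀ j : ℕ, ∃ x' : ℝ, (1 ≤ j → j ≤ i →
      x' ∈ Set.Ioo (t - j * τ) t ∧
      ξ (t - j * τ) = taylorWithinEval ξ i s t (t - j * τ)
        + D x' * (t - j * τ - t) ^ (i + 1) / ((i + 1).factorial : ℝ)) := by
    intro j
    by_cases hj : 1 ≤ j ∧ j ≤ i
    · obtain ⟨x', hx', heq⟩ := bd_aux_step i τ hτ t ξ hξ j hj.1 hj.2
      exact ⟨x', fun _ _ => ⟨hx', heq⟩⟩
    · exact ⟨t, fun h1 h2 => absurd ⟨h1, h2⟩ hj⟩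
  choose r hr using hex
  refine ⟨r, fun j hj => by simp only [Finset.mem_Icc] at hj; exact (hr j hj.1 hj.2).1, ?_⟩
  -- uniform Taylor identity including j = 0
  have hTid : ∀ j ∈ Finset.range (i + 1),
      ξ (t - j * τ) = taylorWithinEval ξ i s t (t - j * τ)
        + D (r j) * (t - j * τ - t) ^ (i + 1) / ((i + 1).factorial : ℝ) := by
    intro j hj
    rcases Nat.eq_zero_or_pos j with h0 | hpos
    · subst h0
      simp
    · exact (hr j hpos (by simpa using Nat.lt_succ_iff.mp (Finset.mem_range.mp hj))).2
  have hτne : τ ≠ 0 := hτ.ne'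
  -- split the sum
  have hsplit : ∑ j ∈ Finset.range (i + 1), (-1 : ℝ) ^ j * (i.choose j : ℝ) * ξ (t - j * τ)
      = (∑ j ∈ Finset.range (i + 1),
          (-1 : ℝ) ^ j * (i.choose j : ℝ) * taylorWithinEval ξ i s t (t - j * τ))
        + ∑ j ∈ Finset.range (i + 1), (-1 : ℝ) ^ j * (i.choose j : ℝ) *
            (D (r j) * (t - j * τ - t) ^ (i + 1) / ((i + 1).factorial : ℝ)) := by
    rw [← Finset.sum_add_distrib]
    refine Finset.sum_congr rfl fun j hj => ?_
    rw [hTid j hj]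
    ring
  -- the Taylor-polynomial part sums to τ^i * d i
  have hT : ∑ j ∈ Finset.range (i + 1),
      (-1 : ℝ) ^ j * (i.choose j : ℝ) * taylorWithinEval ξ i s t (t - j * τ)
      = τ ^ i * d i := by
    have step1 : ∀ j : ℕ, taylorWithinEval ξ i s t (t - j * τ)
        = ∑ k ∈ Finset.range (i + 1), ((k.factorial : ℝ))⁻¹ * (j : ℝ) ^ k * (-τ) ^ k * d k := by
      intro j
      rw [taylor_within_apply]
      refine Finset.sum_congr rfl fun k _ => ?_
      rw [smul_eq_mul]
      have h1 : t - j * τ - t = (j : ℝ) * (-τ) := by ring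
      rw [h1, mul_pow]
      ring
    calc ∑ j ∈ Finset.range (i + 1),
          (-1 : ℝ) ^ j * (i.choose j : ℝ) * taylorWithinEval ξ i s t (t - j * τ)
        = ∑ k ∈ Finset.range (i + 1),
            ((k.factorial : ℝ))⁻¹ * (-τ) ^ k * d k * altS i k := by
          simp_rw [step1, Finset.mul_sum]
          rw [Finset.sum_comm]
          refine Finset.sum_congr rfl fun k _ => ?_
          rw [altS, Finset.mul_sum]
          refine Finset.sum_congr rfl fun j _ => ?_
          ring
      _ = ((i.factorial : ℝ))⁻¹ * (-τ) ^ i * d i * ((-1 : ℝ) ^ i * (i.factorial : ℝ)) := by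
          rw [Finset.sum_eq_single_of_mem i (Finset.self_mem_range_succ i)]
          · rw [(altS_eq i).2]
          · intro k hk hki
            rw [(altS_eq i).1 k (by simp only [Finset.mem_range] at hk; omega), mul_zero]
      _ = τ ^ i * d i := by
          have h11 : ((-1 : ℝ)) ^ i * (-1 : ℝ) ^ i = 1 := by
            rw [← pow_add, ← two_mul, pow_mul]
            norm_num
          have hfa : (i.factorial : ℝ) ≠ 0 := by exact_mod_cast i.factorial_ne_zero
          calc ((i.factorial : ℝ))⁻¹ * (-τ) ^ i * d i * ((-1 : ℝ) ^ i * (i.factorial : ℝ))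
              = ((-1 : ℝ) ^ i * (-1 : ℝ) ^ i) * (((i.factorial : ℝ))⁻¹ * (i.factorial : ℝ))
                * (τ ^ i * d i) := by rw [neg_pow]; ring
            _ = τ ^ i * d i := by rw [h11, inv_mul_cancel₀ hfa]; ring
  -- the remainder part reduces to a sum over Icc 1 i
  have hrange : Finset.range (i + 1) = insert 0 (Finset.Icc 1 i) := by
    ext m
    simp only [Finset.mem_range, Finset.mem_insert, Finset.mem_Icc]
    omega
  have hR : ∑ j ∈ Finset.range (i + 1), (-1 : ℝ) ^ j * (i.choose j : ℝ) *
        (D (r j) * (t - j * τ - t) ^ (i + 1) / ((i + 1).factorial : ℝ))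
      = ∑ j ∈ Finset.Icc 1 i, (-1 : ℝ) ^ j * (i.choose j : ℝ) *
        (D (r j) * (t - j * τ - t) ^ (i + 1) / ((i + 1).factorial : ℝ)) := by
    rw [hrange, Finset.sum_insert (by simp)]
    simp
  -- zpow facts
  have hz1 : τ ^ (-(i : ℤ)) * τ ^ i = 1 := by
    rw [← zpow_natCast τ i, ← zpow_add₀ hτne]
    simp
  have hz2 : τ ^ (-(i : ℤ)) * τ ^ (i + 1) = τ := by
    rw [← zpow_natCast τ (i + 1), ← zpow_add₀ hτne]
    have : (-(i : ℤ)) + ((i : ℕ) + 1 : ℕ) = 1 := by push_cast; ring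
    rw [this, zpow_one]
  -- finish
  rw [show bdApprox ξ τ i t = τ ^ (-(i : ℤ)) *
      ∑ j ∈ Finset.range (i + 1), (-1 : ℝ) ^ j * (i.choose j : ℝ) * ξ (t - j * τ) from rfl]
  rw [hsplit, hT, hR, mul_add, ← mul_assoc, hz1, one_mul]
  rw [add_sub_cancel_left]
  rw [Finset.mul_sum, Finset.mul_sum]
  refine Finset.sum_congr rfl fun j hj => ?_
  have h1 : (t - j * τ - t) ^ (i + 1) = (-(j : ℝ)) ^ (i + 1) * τ ^ (i + 1) := by
    rw [← mul_pow]
    ring_nf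
  rw [h1]
  calc τ ^ (-(i : ℤ)) * ((-1 : ℝ) ^ j * (i.choose j : ℝ) *
        (D (r j) * ((-(j : ℝ)) ^ (i + 1) * τ ^ (i + 1)) / ((i + 1).factorial : ℝ)))
      = (τ ^ (-(i : ℤ)) * τ ^ (i + 1)) / ((i + 1).factorial : ℝ) *
          ((-1 : ℝ) ^ j * (i.choose j : ℝ) * (-(j : ℝ)) ^ (i + 1) * D (r j)) := by
        ring
    _ = τ / ((i + 1).factorial : ℝ) *
          ((-1 : ℝ) ^ j * (i.choose j : ℝ) * (-(j : ℝ)) ^ (i + 1) * D (r j)) := by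
        rw [hz2]
end

section
/- Let i ≥ 1, τ > 0, t ∈ ℝ, and let ξ : ℝ → ℝ be (i+1)-times continuously differentiable on [t − iτ, t]. If B ≥ 0 satisfies |ξ^{(i+1)}(s)| ≤ B for all s ∈ [t − iτ, t], then |∇^i_τ ξ(t) − ξ^{(i)}(t)| ≤ (τ · B / (i+1)!) · Σ_{j=1}^{i} (i choose j) · j^{i+1}. -/
open Finset fwdDiff

lemma fwdDiff_pow_one (k : ℕ) :
    Δ_[(1:ℝ)] (fun x : ℝ => x ^ k) = fun x => ∑ l ∈ range k, (k.choose l : ℝ) * x ^ l := by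
  funext x
  rw [fwdDiff]
  rw [add_pow]
  simp only [one_pow, mul_one]
  rw [Finset.sum_range_succ]
  simp [Nat.choose_self, mul_comm]

lemma fd_main : ∀ i : ℕ, (∀ k < i, (Δ_[(1:ℝ)])^[i] (fun x : ℝ => x ^ k) = fun _ => 0) ∧
    (Δ_[(1:ℝ)])^[i] (fun x : ℝ => x ^ i) = fun _ => (i.factorial : ℝ) := by
  intro i
  induction i with
  | zero =>
    refine ⟨fun k hk => absurd hk (Nat.not_lt_zero k), ?_⟩
    funext x; simp
  | succ i IH =>
    have step : ∀ k : ℕ, (Δ_[(1:ℝ)])^[i+1] (fun x : ℝ => x ^ k)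
        = ∑ l ∈ range k, (k.choose l : ℝ) • (Δ_[(1:ℝ)])^[i] (fun x : ℝ => x ^ l) := by
      intro k
      rw [Function.iterate_succ_apply, fwdDiff_pow_one]
      have : (fun x : ℝ => ∑ l ∈ range k, (k.choose l : ℝ) * x ^ l)
          = ∑ l ∈ range k, (k.choose l : ℝ) • (fun x : ℝ => x ^ l) := by
        funext x; simp [Finset.sum_apply]
      rw [this, fwdDiff_iter_finset_sum]
      simp
    constructor
    · intro k hk
      rw [step]
      apply Finset.sum_eq_zero
      intro l hl
      rw [Finset.mem_range] at hl
      rw [IH.1 l (by omega)]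
      funext x; simp
    · rw [step, Finset.sum_range_succ, IH.2]
      have h0 : ∑ l ∈ range i, ((i+1).choose l : ℝ) • (Δ_[(1:ℝ)])^[i] (fun x : ℝ => x ^ l)
          = 0 := by
        apply Finset.sum_eq_zero
        intro l hl
        rw [Finset.mem_range] at hl
        rw [IH.1 l hl]
        funext x; simp
      rw [h0, zero_add]
      funext x
      simp only [Pi.smul_apply, Nat.choose_succ_self_right, Nat.factorial_succ, smul_eq_mul]
      push_cast
      ring

lemma alt_sum_pow (i k : ℕ) :
    ∑ j ∈ range (i+1), (-1:ℝ)^j * (i.choose j : ℝ) * (j:ℝ)^k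
      = (-1:ℝ)^i * ((Δ_[(1:ℝ)])^[i] (fun x : ℝ => x ^ k) 0) := by
  rw [fwdDiff_iter_eq_sum_shift]
  rw [Finset.mul_sum]
  apply Finset.sum_congr rfl
  intro j hj
  rw [Finset.mem_range] at hj
  have hji : j ≤ i := by omega
  have : ((-1:ℤ)^(i-j) * (i.choose j : ℤ)) • ((0:ℝ) + j • (1:ℝ))^k
      = ((-1:ℝ)^(i-j) * (i.choose j : ℝ)) * (j:ℝ)^k := by
    push_cast [zsmul_eq_mul, nsmul_eq_mul]
    ring
  rw [this]
  have hsign : (-1:ℝ)^i * (-1:ℝ)^(i-j) = (-1:ℝ)^j := by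
    rw [← pow_add]
    have : i + (i - j) = 2*(i-j) + j := by omega
    rw [this, pow_add, pow_mul]
    norm_num
  calc (-1:ℝ)^j * (i.choose j : ℝ) * (j:ℝ)^k
      = ((-1:ℝ)^i * (-1:ℝ)^(i-j)) * (i.choose j : ℝ) * (j:ℝ)^k := by rw [hsign]
    _ = (-1:ℝ)^i * ((-1:ℝ)^(i-j) * (i.choose j : ℝ) * (j:ℝ)^k) := by ring

lemma alt_sum_pow_lt {i k : ℕ} (h : k < i) :
    ∑ j ∈ range (i+1), (-1:ℝ)^j * (i.choose j : ℝ) * (j:ℝ)^k = 0 := by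
  rw [alt_sum_pow, (fd_main i).1 k h]
  simp

lemma alt_sum_pow_self (i : ℕ) :
    ∑ j ∈ range (i+1), (-1:ℝ)^j * (i.choose j : ℝ) * (j:ℝ)^i
      = (-1:ℝ)^i * (i.factorial : ℝ) := by
  rw [alt_sum_pow, (fd_main i).2]


lemma iterDW_subset {f : ℝ → ℝ} {S T : Set ℝ} {n : ℕ} (hf : ContDiffOn ℝ n f T)
    (hT : UniqueDiffOn ℝ T) (hS : UniqueDiffOn ℝ S) (hsub : S ⊆ T)
    {m : ℕ} (hm : m ≤ n) {x : ℝ} (hx : x ∈ S) :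
    iteratedDerivWithin m f S x = iteratedDerivWithin m f T x := by
  have H := (hf.ftaylorSeriesWithin hT).mono hsub
  have h1 := H.eq_iteratedFDerivWithin_of_uniqueDiffOn (by exact_mod_cast hm) hS hx
  have h2 : ftaylorSeriesWithin ℝ f T x m = iteratedFDerivWithin ℝ m f T x := rfl
  rw [iteratedDerivWithin, iteratedDerivWithin, ← h1, h2]

lemma iterDW_reflect {f : ℝ → ℝ} {a b : ℝ} (hab : a < b) {n : ℕ}
    (hf : ContDiffOn ℝ n f (Set.Icc a b)) {k : ℕ} (hk : k ≤ n) :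
    ∀ x ∈ Set.Icc a b,
    iteratedDerivWithin k (fun y => f (a + b - y)) (Set.Icc a b) x
      = (-1:ℝ)^k * iteratedDerivWithin k f (Set.Icc a b) (a + b - x) := by
  have hmem : ∀ y ∈ Set.Icc a b, a + b - y ∈ Set.Icc a b := by
    intro y hy
    rw [Set.mem_Icc] at hy ⊢
    constructor <;> linarith [hy.1, hy.2]
  have hu := uniqueDiffOn_Icc hab
  induction k with
  | zero => intro x hx; simp
  | succ k IH =>
    intro x hx
    have hkn : k ≤ n := Nat.le_of_succ_le hk
    have hdiff : DifferentiableOn ℝ (iteratedDerivWithin k f (Set.Icc a b)) (Set.Icc a b) :=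
      hf.differentiableOn_iteratedDerivWithin (by exact_mod_cast hk) hu
    have hF : HasDerivWithinAt (iteratedDerivWithin k f (Set.Icc a b))
        (derivWithin (iteratedDerivWithin k f (Set.Icc a b)) (Set.Icc a b) (a + b - x))
        (Set.Icc a b) (a + b - x) :=
      (hdiff _ (hmem x hx)).hasDerivWithinAt
    have hφ : HasDerivWithinAt (fun y : ℝ => a + b - y) (-1) (Set.Icc a b) x := by
      simpa using ((hasDerivAt_id x).const_sub (a + b)).hasDerivWithinAt
    have hcomp := hF.comp x hφ (fun y hy => hmem y hy)
    have heq : Set.EqOn (iteratedDerivWithin k (fun y => f (a + b - y)) (Set.Icc a b))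
        (fun y => (-1:ℝ)^k * iteratedDerivWithin k f (Set.Icc a b) (a + b - y))
        (Set.Icc a b) := fun y hy => IH hkn y hy
    rw [iteratedDerivWithin_succ, derivWithin_congr heq (heq hx)]
    have hcomp2 : HasDerivWithinAt
        (fun y => (-1:ℝ)^k * iteratedDerivWithin k f (Set.Icc a b) (a + b - y))
        ((-1:ℝ)^k * (derivWithin (iteratedDerivWithin k f (Set.Icc a b)) (Set.Icc a b) (a + b - x) * -1))
        (Set.Icc a b) x := hcomp.const_mul _
    rw [hcomp2.derivWithin (hu x hx), iteratedDerivWithin_succ]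
    ring

lemma taylor_right_bound {f : ℝ → ℝ} {a b : ℝ} (hab : a < b) {n : ℕ}
    (hf : ContDiffOn ℝ (n+1) f (Set.Icc a b)) {C : ℝ} (hC0 : 0 ≤ C)
    (hC : ∀ y ∈ Set.Icc a b, |iteratedDerivWithin (n+1) f (Set.Icc a b) y| ≤ C)
    {x : ℝ} (hx : x ∈ Set.Icc a b) :
    |f x - ∑ k ∈ range (n+1),
        (x - b)^k / (k.factorial : ℝ) * iteratedDerivWithin k f (Set.Icc a b) b|
      ≤ C * (b - x)^(n+1) / ((n+1).factorial : ℝ) := by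
  rcases eq_or_lt_of_le hx.2 with rfl | hxb
  · have hsum : ∑ k ∈ range (n+1),
        (x - x)^k / (k.factorial : ℝ) * iteratedDerivWithin k f (Set.Icc a x) x = f x := by
      rw [Finset.sum_eq_single_of_mem 0 (Finset.mem_range.2 (Nat.succ_pos n))]
      · simp [iteratedDerivWithin_zero]
      · intro k _ hk
        simp [zero_pow hk, sub_self]
    rw [hsum, sub_self, abs_zero, sub_self, zero_pow (Nat.succ_ne_zero n)]
    positivity
  · set x' := a + b - x with hx'def
    have hax' : a < x' := by simp [hx'def]; linarith
    have hx'b : x' ≤ b := by simp [hx'def]; linarith [hx.1]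
    have hmem : ∀ y ∈ Set.Icc a b, a + b - y ∈ Set.Icc a b := by
      intro y hy
      rw [Set.mem_Icc] at hy ⊢
      constructor <;> linarith [hy.1, hy.2]
    have hu := uniqueDiffOn_Icc hab
    have hu' := uniqueDiffOn_Icc hax'
    have hsub : Set.Icc a x' ⊆ Set.Icc a b := Set.Icc_subset_Icc le_rfl hx'b
    set g : ℝ → ℝ := fun y => f (a + b - y) with hgdef
    have hφ : ContDiffOn ℝ (n+1) (fun y : ℝ => a + b - y) (Set.Icc a b) :=
      (contDiff_const.sub contDiff_id).contDiffOn
    have hg : ContDiffOn ℝ (n+1) g (Set.Icc a b) :=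
      hf.comp hφ (fun y hy => hmem y hy)
    have htrans : ∀ m : ℕ, m ≤ n + 1 → ∀ y ∈ Set.Icc a x',
        iteratedDerivWithin m g (Set.Icc a x') y = iteratedDerivWithin m g (Set.Icc a b) y :=
      fun m hm y hy => iterDW_subset hg hu hu' hsub hm hy
    have hdiff : DifferentiableOn ℝ (iteratedDerivWithin n g (Set.Icc a b)) (Set.Icc a b) :=
      hg.differentiableOn_iteratedDerivWithin (by exact_mod_cast Nat.lt_succ_self n) hu
    have hgn : ContDiffOn ℝ n g (Set.Icc a x') :=
      (hg.mono hsub).of_le (by exact_mod_cast Nat.le_succ n)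
    have hIoo : Set.Ioo a x' ⊆ Set.Icc a x' := Set.Ioo_subset_Icc_self
    have hf' : DifferentiableOn ℝ (iteratedDerivWithin n g (Set.Icc a x')) (Set.Ioo a x') := by
      apply ((hdiff.mono (hIoo.trans hsub)).congr)
      intro y hy
      exact htrans n (Nat.le_succ n) y (hIoo hy)
    obtain ⟨y, hy, hrem⟩ : ∃ y ∈ Set.Ioo a x', g x' - taylorWithinEval g n (Set.Icc a x') a x'
        = iteratedDerivWithin (n+1) g (Set.Icc a x') y * (x' - a)^(n+1) / ((n+1).factorial : ℝ) := by
      have := taylor_mean_remainder_lagrange (f := g) hax'.ne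
        (by rwa [Set.uIcc_of_le hax'.le]) (by rwa [Set.uIcc_of_le hax'.le, Set.uIoo_of_le hax'.le])
      rwa [Set.uIcc_of_le hax'.le, Set.uIoo_of_le hax'.le] at this
    have hgx' : g x' = f x := by
      simp only [hgdef, hx'def]
      norm_num
    have hTP : taylorWithinEval g n (Set.Icc a x') a x'
        = ∑ k ∈ range (n+1),
            (x - b)^k / (k.factorial : ℝ) * iteratedDerivWithin k f (Set.Icc a b) b := by
      rw [taylor_within_apply]
      apply Finset.sum_congr rfl
      intro k hk
      rw [Finset.mem_range] at hk
      have h1 : iteratedDerivWithin k g (Set.Icc a x') a = iteratedDerivWithin k g (Set.Icc a b) a :=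
        htrans k (by omega) a (Set.mem_Icc.2 ⟨le_rfl, le_of_lt hax'⟩)
      have hf' : ContDiffOn ℝ ((n+1 : ℕ)) f (Set.Icc a b) := by exact_mod_cast hf
      have h2 := iterDW_reflect (n := n+1) hab hf' (k := k) (by omega) a
        (Set.mem_Icc.2 ⟨le_rfl, le_of_lt hab⟩)
      have h3 : a + b - a = b := by ring
      rw [h1, hgdef]
      rw [h2, h3]
      have h4 : x' - a = b - x := by rw [hx'def]; ring
      rw [h4, smul_eq_mul]
      have h5 : (x - b)^k = (-1:ℝ)^k * (b - x)^k := by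
        rw [← neg_pow]; ring_nf
      rw [h5]
      ring
    have hremval : iteratedDerivWithin (n+1) g (Set.Icc a x') y
        = (-1:ℝ)^(n+1) * iteratedDerivWithin (n+1) f (Set.Icc a b) (a + b - y) := by
      rw [htrans (n+1) le_rfl y (hIoo hy), hgdef]
      have hf2 : ContDiffOn ℝ ((n+1 : ℕ)) f (Set.Icc a b) := by exact_mod_cast hf
      exact iterDW_reflect (n := n+1) hab hf2 le_rfl y (hsub (hIoo hy))
    rw [hgx', hTP] at hrem
    rw [hrem, hremval]
    have hyS : a + b - y ∈ Set.Icc a b := hmem y (hsub (hIoo hy))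
    have h6 : x' - a = b - x := by rw [hx'def]; ring
    rw [h6]
    rw [abs_div, abs_mul, abs_mul]
    have hbx : (0:ℝ) ≤ b - x := by linarith
    rw [abs_of_nonneg (pow_nonneg hbx _), abs_of_nonneg (by positivity : (0:ℝ) ≤ ((n+1).factorial : ℝ))]
    have hfact : (0:ℝ) < ((n+1).factorial : ℝ) := by positivity
    have hD : |(-1:ℝ)^(n+1)| * |iteratedDerivWithin (n+1) f (Set.Icc a b) (a + b - y)| ≤ C := by
      rw [abs_pow, abs_neg, abs_one, one_pow, one_mul]
      exact hC (a + b - y) hyS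
    exact (div_le_div_iff_of_pos_right hfact).mpr (mul_le_mul_of_nonneg_right hD (pow_nonneg hbx _))

theorem bdApprox_error_bound (i : ℕ) (hi : 1 ≤ i) (τ : ℝ) (hτ : 0 < τ)
    (t : ℝ) (ξ : ℝ → ℝ)
    (hξ : ContDiffOn ℝ (i + 1) ξ (Set.Icc (t - i * τ) t))
    (B : ℝ) (hB : 0 ≤ B)
    (hbound : ∀ s ∈ Set.Icc (t - i * τ) t,
      |iteratedDerivWithin (i + 1) ξ (Set.Icc (t - i * τ) t) s| ≤ B) :
    |bdApprox ξ τ i t - iteratedDerivWithin i ξ (Set.Icc (t - i * τ) t) t|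
      ≤ τ * B / ((i + 1).factorial : ℝ) *
          ∑ j ∈ Finset.Icc 1 i, (i.choose j : ℝ) * (j : ℝ) ^ (i + 1) := by
  have hiR : (1:ℝ) ≤ (i:ℝ) := by exact_mod_cast hi
  have hab : t - (i:ℝ) * τ < t := by nlinarith
  have hτi : (τ:ℝ)^i ≠ 0 := pow_ne_zero _ hτ.ne'
  have hfa : (0:ℝ) < ((i+1).factorial : ℝ) := Nat.cast_pos.2 (Nat.factorial_pos _)
  set S := Set.Icc (t - (i:ℝ) * τ) t with hS
  set E : ℕ → ℝ := fun j => ξ (t - (j:ℝ)*τ) - ∑ k ∈ Finset.range (i+1),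
      ((t - (j:ℝ)*τ) - t)^k / (k.factorial : ℝ) * iteratedDerivWithin k ξ S t with hE
  have hEbound : ∀ j ∈ Finset.range (i+1),
      |E j| ≤ B * ((j:ℝ)*τ)^(i+1) / (((i+1).factorial : ℕ) : ℝ) := by
    intro j hj
    rw [Finset.mem_range, Nat.lt_succ_iff] at hj
    have hji : (j:ℝ) ≤ (i:ℝ) := by exact_mod_cast hj
    have hx : t - (j:ℝ)*τ ∈ S := by
      rw [hS, Set.mem_Icc]
      constructor
      · nlinarith
      · nlinarith [Nat.cast_nonneg (α := ℝ) j]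
    have hbd := taylor_right_bound (n := i) hab hξ hB hbound hx
    have h7 : t - (t - (j:ℝ)*τ) = (j:ℝ)*τ := by ring
    rw [h7] at hbd
    exact hbd
  have expand : ∑ j ∈ Finset.range (i+1), (-1:ℝ)^j * (i.choose j : ℝ) * ξ (t - (j:ℝ)*τ)
      = τ^i * iteratedDerivWithin i ξ S t
        + ∑ j ∈ Finset.range (i+1), (-1:ℝ)^j * (i.choose j : ℝ) * E j := by
    have h1 : ∀ j ∈ Finset.range (i+1), (-1:ℝ)^j * (i.choose j : ℝ) * ξ (t - (j:ℝ)*τ)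
        = (∑ k ∈ Finset.range (i+1), ((-1:ℝ)^j * (i.choose j : ℝ) * (j:ℝ)^k)
            * ((-τ)^k / (k.factorial : ℝ) * iteratedDerivWithin k ξ S t))
          + (-1:ℝ)^j * (i.choose j : ℝ) * E j := by
      intro j _
      have hξj : ξ (t - (j:ℝ)*τ) = (∑ k ∈ Finset.range (i+1),
          ((t - (j:ℝ)*τ) - t)^k / (k.factorial : ℝ) * iteratedDerivWithin k ξ S t) + E j := by
        rw [hE]; ring
      rw [hξj, mul_add, Finset.mul_sum]
      congr 1
      apply Finset.sum_congr rfl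
      intro k _
      have h8 : (t - (j:ℝ)*τ) - t = (-τ) * (j:ℝ) := by ring
      rw [h8, mul_pow]
      ring
    rw [Finset.sum_congr rfl h1, Finset.sum_add_distrib]
    congr 1
    rw [Finset.sum_comm]
    calc ∑ k ∈ Finset.range (i+1), ∑ j ∈ Finset.range (i+1),
          ((-1:ℝ)^j * (i.choose j : ℝ) * (j:ℝ)^k)
            * ((-τ)^k / (k.factorial : ℝ) * iteratedDerivWithin k ξ S t)
        = ∑ k ∈ Finset.range (i+1),
            (∑ j ∈ Finset.range (i+1), (-1:ℝ)^j * (i.choose j : ℝ) * (j:ℝ)^k)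
              * ((-τ)^k / (k.factorial : ℝ) * iteratedDerivWithin k ξ S t) := by
          apply Finset.sum_congr rfl; intro k _; rw [Finset.sum_mul]
      _ = τ^i * iteratedDerivWithin i ξ S t := by
          rw [Finset.sum_eq_single_of_mem i (Finset.self_mem_range_succ i)]
          · rw [alt_sum_pow_self]
            have hne : ((i.factorial : ℕ) : ℝ) ≠ 0 := Nat.cast_ne_zero.2 (Nat.factorial_ne_zero i)
            have hsq : (-1:ℝ)^i * (-1:ℝ)^i = 1 := by
              rw [← pow_add]
              exact Even.neg_one_pow ⟨i, rfl⟩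
            rw [neg_pow τ i]
            calc (-1:ℝ)^i * (i.factorial : ℝ)
                  * ((-1:ℝ)^i * τ^i / (i.factorial : ℝ) * iteratedDerivWithin i ξ S t)
                = ((-1:ℝ)^i * (-1:ℝ)^i) * ((i.factorial : ℝ) / (i.factorial : ℝ))
                    * (τ^i * iteratedDerivWithin i ξ S t) := by ring
              _ = τ^i * iteratedDerivWithin i ξ S t := by
                  rw [hsq, div_self hne, one_mul, one_mul]
          · intro k hk hki
            rw [Finset.mem_range, Nat.lt_succ_iff] at hk
            rw [alt_sum_pow_lt (lt_of_le_of_ne hk hki), zero_mul]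
  have hτpow : τ ^ (-(i:ℤ)) = (τ^i)⁻¹ := by rw [zpow_neg, zpow_natCast]
  have key : bdApprox ξ τ i t - iteratedDerivWithin i ξ S t
      = (τ^i)⁻¹ * ∑ j ∈ Finset.range (i+1), (-1:ℝ)^j * (i.choose j : ℝ) * E j := by
    unfold bdApprox
    rw [hτpow, expand, mul_add]
    have hcancel : (τ^i)⁻¹ * (τ^i * iteratedDerivWithin i ξ S t)
        = iteratedDerivWithin i ξ S t := by
      rw [← mul_assoc, inv_mul_cancel₀ hτi, one_mul]
    rw [hcancel]
    ring
  rw [key]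
  calc |(τ^i)⁻¹ * ∑ j ∈ Finset.range (i+1), (-1:ℝ)^j * (i.choose j : ℝ) * E j|
      ≤ (τ^i)⁻¹ * ∑ j ∈ Finset.range (i+1),
          (i.choose j : ℝ) * (B * ((j:ℝ)*τ)^(i+1) / (((i+1).factorial : ℕ) : ℝ)) := by
        rw [abs_mul, abs_of_nonneg (by positivity : (0:ℝ) ≤ (τ^i)⁻¹)]
        apply mul_le_mul_of_nonneg_left _ (by positivity)
        refine (Finset.abs_sum_le_sum_abs _ _).trans (Finset.sum_le_sum ?_)
        intro j hj
        rw [abs_mul, abs_mul, abs_pow, abs_neg, abs_one, one_pow, one_mul, Nat.abs_cast]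
        exact mul_le_mul_of_nonneg_left (hEbound j hj) (Nat.cast_nonneg _)
    _ = τ * B / ((i + 1).factorial : ℝ)
          * ∑ j ∈ Finset.Icc 1 i, (i.choose j : ℝ) * (j : ℝ) ^ (i + 1) := by
        have hIcc : ∑ j ∈ Finset.Icc 1 i, (i.choose j : ℝ) * (j : ℝ) ^ (i + 1)
            = ∑ j ∈ Finset.range (i+1), (i.choose j : ℝ) * (j : ℝ) ^ (i + 1) := by
          apply Finset.sum_subset
          · intro j hj
            rw [Finset.mem_Icc] at hj
            rw [Finset.mem_range]
            omega
          · intro j hj hnot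
            have hj0 : j = 0 := by
              rw [Finset.mem_range] at hj
              rw [Finset.mem_Icc] at hnot
              omega
            subst hj0
            simp
        rw [hIcc, Finset.mul_sum, Finset.mul_sum]
        apply Finset.sum_congr rfl
        intro j _
        rw [mul_pow, pow_succ τ i]
        field_simp
end

section
/- Let i ≥ 1, t ∈ ℝ, τ₀ > 0, and let ξ : ℝ → ℝ be (i+2)-times continuously differentiable on [t − iτ₀, t]. Then there exists a constant C ≥ 0 such that for all τ ∈ (0, τ₀], |ξ^{(i)}(t) − ∇^i_τ ξ(t)| ≤ τ · |(ξ^{(i+1)}(t) / (i+1)!) · Σ_{j=0}^{i} (−1)^j · (i choose j) · (−j)^{i+1}| + C · τ². -/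
open Finset Function
open scoped fwdDiff

lemma fwdDiff_pow_succ (k : ℕ) :
    Δ_[(1:ℝ)] (fun x : ℝ => x ^ k) = fun x : ℝ => ∑ m ∈ range k, (k.choose m : ℝ) * x ^ m := by
  funext x
  have h := add_pow x (1:ℝ) k
  simp only [one_pow, mul_one] at h
  rw [fwdDiff, h, Finset.sum_range_succ]
  simp only [Nat.choose_self, Nat.cast_one, mul_one, add_sub_cancel_right]
  exact Finset.sum_congr rfl fun m _ => mul_comm _ _

lemma fwdDiff_iter_sum_pow (n k : ℕ) (c : ℕ → ℝ) :
    (Δ_[(1:ℝ)])^[n] (fun x : ℝ => ∑ m ∈ range k, c m * x ^ m)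
      = fun x => ∑ m ∈ range k, c m * ((Δ_[(1:ℝ)])^[n] (fun x : ℝ => x ^ m) x) := by
  have : (fun x : ℝ => ∑ m ∈ range k, c m * x ^ m)
      = ∑ m ∈ range k, (c m) • (fun x : ℝ => x ^ m) := by
    funext x; simp [Finset.sum_apply]
  rw [this, fwdDiff_iter_finset_sum]
  funext x
  simp [Finset.sum_apply, fwdDiff_iter_const_smul]

lemma fwdDiff_pow_eq_zero : ∀ (k i : ℕ), k < i →
    (Δ_[(1:ℝ)])^[i] (fun x : ℝ => x ^ k) = fun _ => 0 := by
  intro k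
  induction k using Nat.strong_induction_on with
  | _ k IH =>
    intro i hk
    obtain ⟨i, rfl⟩ : ∃ i', i = i' + 1 := ⟨i - 1, by omega⟩
    rw [Function.iterate_succ_apply, fwdDiff_pow_succ, fwdDiff_iter_sum_pow]
    funext x
    rw [Finset.sum_eq_zero]
    intro m hm
    have hm' := Finset.mem_range.mp hm
    rw [IH m hm' i (by omega)]
    simp

lemma fwdDiff_pow_self (i : ℕ) :
    (Δ_[(1:ℝ)])^[i] (fun x : ℝ => x ^ i) = fun _ => (i.factorial : ℝ) := by
  induction i with
  | zero => funext x; simp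
  | succ i IH =>
    rw [Function.iterate_succ_apply, fwdDiff_pow_succ, fwdDiff_iter_sum_pow]
    funext x
    rw [Finset.sum_eq_single i]
    · rw [IH]
      simp [Nat.factorial_succ, Nat.choose_succ_self_right]
    · intro m hm hmi
      have hm' := Finset.mem_range.mp hm
      rw [fwdDiff_pow_eq_zero m i (by omega)]
      simp
    · intro h
      exact absurd (Finset.self_mem_range_succ i) h

lemma alt_sum_choose_pow (i k : ℕ) :
    ∑ j ∈ range (i + 1), (-1 : ℝ) ^ j * (i.choose j : ℝ) * (j : ℝ) ^ k
      = (-1 : ℝ) ^ i * (Δ_[(1:ℝ)])^[i] (fun x : ℝ => x ^ k) 0 := by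
  rw [fwdDiff_iter_eq_sum_shift, Finset.mul_sum]
  refine Finset.sum_congr rfl fun j hj => ?_
  have hji : j ≤ i := by have := Finset.mem_range.mp hj; omega
  rw [zsmul_eq_mul]
  push_cast
  simp only [zero_add, nsmul_eq_mul, mul_one]
  have h2 : (-1:ℝ)^i * (-1:ℝ)^(i-j) = (-1:ℝ)^j := by
    rw [← pow_add]
    have he : i + (i - j) = 2*(i-j) + j := by omega
    rw [he, pow_add, pow_mul]
    simp
  calc (-1:ℝ) ^ j * (i.choose j : ℝ) * (j:ℝ) ^ k
      = ((-1:ℝ)^i * (-1:ℝ)^(i-j)) * (i.choose j : ℝ) * (j:ℝ)^k := by rw [h2]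
    _ = (-1:ℝ)^i * ((-1:ℝ)^(i-j) * (i.choose j : ℝ) * (j:ℝ)^k) := by ring

lemma alt_sum_choose_pow_lt (i k : ℕ) (h : k < i) :
    ∑ j ∈ range (i + 1), (-1 : ℝ) ^ j * (i.choose j : ℝ) * (j : ℝ) ^ k = 0 := by
  rw [alt_sum_choose_pow, fwdDiff_pow_eq_zero k i h]
  simp

lemma alt_sum_choose_pow_self (i : ℕ) :
    ∑ j ∈ range (i + 1), (-1 : ℝ) ^ j * (i.choose j : ℝ) * (j : ℝ) ^ i
      = (-1:ℝ)^i * (i.factorial : ℝ) := by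
  rw [alt_sum_choose_pow, fwdDiff_pow_self]
open Finset Set

lemma reflect_contDiffOn {a b : ℝ} {n : ℕ} {f : ℝ → ℝ}
    (hf : ContDiffOn ℝ n f (Set.Icc a b)) :
    ContDiffOn ℝ n (fun y => f (a + b - y)) (Set.Icc a b) := by
  have hι : ContDiffOn ℝ n (fun y : ℝ => a + b - y) (Set.Icc a b) :=
    (contDiff_const.sub contDiff_id).contDiffOn
  refine hf.comp hι fun y hy => ?_
  simp only [Set.mem_Icc] at hy ⊢
  constructor <;> linarith [hy.1, hy.2]

lemma iteratedDerivWithin_reflect {a b : ℝ} (hab : a < b) {n : ℕ} {f : ℝ → ℝ}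
    (hf : ContDiffOn ℝ n f (Set.Icc a b)) :
    ∀ k, k ≤ n → ∀ x ∈ Set.Icc a b,
      iteratedDerivWithin k (fun y => f (a + b - y)) (Set.Icc a b) x
        = (-1 : ℝ) ^ k * iteratedDerivWithin k f (Set.Icc a b) (a + b - x) := by
  intro k
  induction k with
  | zero => intro _ x hx; simp
  | succ k IH =>
    intro hk x hx
    have hmem : a + b - x ∈ Set.Icc a b := by
      simp only [Set.mem_Icc] at hx ⊢
      constructor <;> linarith [hx.1, hx.2]
    have hud : UniqueDiffOn ℝ (Set.Icc a b) := uniqueDiffOn_Icc hab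
    set F := iteratedDerivWithin k f (Set.Icc a b) with hF
    have hdiffF : DifferentiableOn ℝ F (Set.Icc a b) :=
      hf.differentiableOn_iteratedDerivWithin (by exact_mod_cast hk) hud
    have hdF : HasDerivWithinAt F
        (iteratedDerivWithin (k + 1) f (Set.Icc a b) (a + b - x)) (Set.Icc a b) (a + b - x) := by
      have h1 := (hdiffF (a + b - x) hmem).hasDerivWithinAt
      rwa [← iteratedDerivWithin_succ] at h1
    have hι : HasDerivWithinAt (fun y : ℝ => a + b - y) (-1) (Set.Icc a b) x := by
      simpa using ((hasDerivWithinAt_id x (Set.Icc a b)).const_sub (a + b))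
    have hmaps : Set.MapsTo (fun y : ℝ => a + b - y) (Set.Icc a b) (Set.Icc a b) := by
      intro y hy
      simp only [Set.mem_Icc] at hy ⊢
      constructor <;> linarith [hy.1, hy.2]
    have hcomp : HasDerivWithinAt (fun y => F (a + b - y))
        (iteratedDerivWithin (k + 1) f (Set.Icc a b) (a + b - x) * (-1)) (Set.Icc a b) x :=
      HasDerivWithinAt.comp x hdF hι hmaps
    have hconst : HasDerivWithinAt (fun y => (-1 : ℝ) ^ k * F (a + b - y))
        ((-1 : ℝ) ^ k * (iteratedDerivWithin (k + 1) f (Set.Icc a b) (a + b - x) * (-1)))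
        (Set.Icc a b) x := hcomp.const_mul _
    rw [iteratedDerivWithin_succ]
    have hcongr : derivWithin (iteratedDerivWithin k (fun y => f (a + b - y)) (Set.Icc a b))
        (Set.Icc a b) x
        = derivWithin (fun y => (-1 : ℝ) ^ k * F (a + b - y)) (Set.Icc a b) x :=
      derivWithin_congr (fun y hy => IH (le_of_lt (Nat.lt_of_succ_le hk)) y hy)
        (IH (le_of_lt (Nat.lt_of_succ_le hk)) x hx)
    rw [hcongr, hconst.derivWithin (hud x hx)]
    ring

lemma taylor_right_endpoint_bound {a b : ℝ} (hab : a < b) {n : ℕ} {f : ℝ → ℝ}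
    (hf : ContDiffOn ℝ (n + 1 : ℕ) f (Set.Icc a b)) :
    ∃ M : ℝ, 0 ≤ M ∧ ∀ x ∈ Set.Icc a b,
      |f x - ∑ k ∈ Finset.range (n + 1),
          iteratedDerivWithin k f (Set.Icc a b) b * (x - b) ^ k / (k.factorial : ℝ)|
        ≤ M * (b - x) ^ (n + 1) := by
  have hud : UniqueDiffOn ℝ (Set.Icc a b) := uniqueDiffOn_Icc hab
  set g : ℝ → ℝ := fun y => f (a + b - y) with hg
  have hgc : ContDiffOn ℝ (n + 1 : ℕ) g (Set.Icc a b) := reflect_contDiffOn hf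
  -- bound on the (n+1)-st derivative of g
  have hcont : ContinuousOn (iteratedDerivWithin (n + 1) f (Set.Icc a b)) (Set.Icc a b) :=
    hf.continuousOn_iteratedDerivWithin le_rfl hud
  obtain ⟨M0, hM0⟩ := isCompact_Icc.exists_bound_of_continuousOn hcont
  set M1 : ℝ := max M0 0 with hM1
  have hM1nn : 0 ≤ M1 := le_max_right _ _
  have hCg : ∀ y ∈ Set.Icc a b, ‖iteratedDerivWithin (n + 1) g (Set.Icc a b) y‖ ≤ M1 := by
    intro y hy
    have hmem : a + b - y ∈ Set.Icc a b := by
      simp only [Set.mem_Icc] at hy ⊢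
      constructor <;> linarith [hy.1, hy.2]
    rw [iteratedDerivWithin_reflect hab hf (n + 1) le_rfl y hy]
    rw [Real.norm_eq_abs, abs_mul, abs_pow, abs_neg, abs_one, one_pow, one_mul]
    exact le_trans (hM0 _ hmem) (le_max_left _ _)
  refine ⟨M1 / (n.factorial : ℝ), by positivity, fun x hx => ?_⟩
  have hmemx : a + b - x ∈ Set.Icc a b := by
    simp only [Set.mem_Icc] at hx ⊢
    constructor <;> linarith [hx.1, hx.2]
  have key := taylor_mean_remainder_bound (le_of_lt hab) hgc hmemx hCg
  have e1 : g (a + b - x) = f x := by simp [hg]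
  have e2 : taylorWithinEval g n (Set.Icc a b) a (a + b - x)
      = ∑ k ∈ Finset.range (n + 1),
          iteratedDerivWithin k f (Set.Icc a b) b * (x - b) ^ k / (k.factorial : ℝ) := by
    rw [taylor_within_apply]
    refine Finset.sum_congr rfl fun k hk => ?_
    have hk' : k ≤ n + 1 := by
      have := Finset.mem_range.mp hk; omega
    have href := iteratedDerivWithin_reflect hab hf k hk' a
      (Set.left_mem_Icc.mpr (le_of_lt hab))
    have e3 : a + b - a = b := by ring
    rw [e3] at href
    rw [show (fun y => f (a + b - y)) = g from rfl] at href
    rw [href]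
    have e4 : (a + b - x - a) ^ k * (-1 : ℝ) ^ k = (x - b) ^ k := by
      rw [← mul_pow]
      congr 1
      ring
    rw [smul_eq_mul, div_eq_mul_inv]
    linear_combination ((k.factorial : ℝ))⁻¹ * iteratedDerivWithin k f (Set.Icc a b) b * e4
  rw [e1, e2] at key
  have e5 : (a + b - x - a) = b - x := by ring
  rw [e5] at key
  rw [Real.norm_eq_abs] at key
  calc |f x - ∑ k ∈ Finset.range (n + 1),
          iteratedDerivWithin k f (Set.Icc a b) b * (x - b) ^ k / (k.factorial : ℝ)|
      ≤ M1 * (b - x) ^ (n + 1) / (n.factorial : ℝ) := key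
    _ = M1 / (n.factorial : ℝ) * (b - x) ^ (n + 1) := by ring

/-- Paper's Lemma 1: the first-order error term of the backward-difference
approximation is explicit, with an `O(τ²)` remainder. -/
theorem bdApprox_error_first_order_term (i : ℕ) (hi : 1 ≤ i) (t τ₀ : ℝ) (hτ₀ : 0 < τ₀)
    (ξ : ℝ → ℝ)
    (hξ : ContDiffOn ℝ (i + 2) ξ (Set.Icc (t - i * τ₀) t)) :
    ∃ C : ℝ, 0 ≤ C ∧ ∀ τ ∈ Set.Ioc (0 : ℝ) τ₀,
      |iteratedDerivWithin i ξ (Set.Icc (t - i * τ₀) t) t - bdApprox ξ τ i t|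
        ≤ τ * |iteratedDerivWithin (i + 1) ξ (Set.Icc (t - i * τ₀) t) t
                / ((i + 1).factorial : ℝ) *
                ∑ j ∈ Finset.range (i + 1),
                  (-1 : ℝ) ^ j * (i.choose j : ℝ) * (-(j : ℝ)) ^ (i + 1)|
          + C * τ ^ 2 := by
  classical
  have hi1 : (1 : ℝ) ≤ (i : ℝ) := by exact_mod_cast hi
  have hab : t - (i : ℝ) * τ₀ < t := by nlinarith
  set S : Set ℝ := Set.Icc (t - (i : ℝ) * τ₀) t with hS
  have hξ' : ContDiffOn ℝ ((i + 1) + 1 : ℕ) ξ S := by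
    have : ((i + 1 + 1 : ℕ) : WithTop ℕ∞) = (i : WithTop ℕ∞) + 2 := by push_cast; ring
    rw [this]
    exact hξ
  obtain ⟨M, hM0, hM⟩ := taylor_right_endpoint_bound hab hξ'
  set d : ℕ → ℝ := fun k => iteratedDerivWithin k ξ S t with hd
  set Sk : ℕ → ℝ := fun k =>
    ∑ j ∈ Finset.range (i + 1), (-1 : ℝ) ^ j * (i.choose j : ℝ) * (-(j : ℝ)) ^ k with hSk
  have hSk0 : ∀ k, k < i → Sk k = 0 := by
    intro k hk
    have h1 : Sk k = (-1 : ℝ) ^ k *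
        ∑ j ∈ Finset.range (i + 1), (-1 : ℝ) ^ j * (i.choose j : ℝ) * (j : ℝ) ^ k := by
      rw [hSk, Finset.mul_sum]
      refine Finset.sum_congr rfl fun j _ => ?_
      rw [neg_pow]
      ring
    rw [h1, alt_sum_choose_pow_lt i k hk, mul_zero]
  have hSki : Sk i = (i.factorial : ℝ) := by
    have h1 : Sk i = (-1 : ℝ) ^ i *
        ∑ j ∈ Finset.range (i + 1), (-1 : ℝ) ^ j * (i.choose j : ℝ) * (j : ℝ) ^ i := by
      rw [hSk, Finset.mul_sum]
      refine Finset.sum_congr rfl fun j _ => ?_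
      rw [neg_pow]
      ring
    rw [h1, alt_sum_choose_pow_self, ← mul_assoc, ← pow_add, Even.neg_one_pow ⟨i, rfl⟩, one_mul]
  refine ⟨M * ∑ j ∈ Finset.range (i + 1), (i.choose j : ℝ) * (j : ℝ) ^ (i + 2),
    mul_nonneg hM0 (Finset.sum_nonneg fun j _ => by positivity), ?_⟩
  rintro τ ⟨hτ0, hττ₀⟩
  have hτi : (τ : ℝ) ^ i ≠ 0 := pow_ne_zero _ (ne_of_gt hτ0)
  have hmemj : ∀ j ∈ Finset.range (i + 1), t - (j : ℝ) * τ ∈ S := by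
    intro j hj
    have hji : (j : ℝ) ≤ (i : ℝ) := by
      have := Finset.mem_range.mp hj
      exact_mod_cast Nat.lt_succ_iff.mp this
    have h1 : (j : ℝ) * τ ≤ (i : ℝ) * τ₀ := by nlinarith [Nat.cast_nonneg (α := ℝ) j]
    have h2 : 0 ≤ (j : ℝ) * τ := by positivity
    simp only [hS, Set.mem_Icc]
    constructor <;> linarith
  set E : ℕ → ℝ := fun j => ξ (t - j * τ) -
      ∑ k ∈ Finset.range (i + 1 + 1),
        iteratedDerivWithin k ξ S t * ((-(j : ℝ)) ^ k * τ ^ k) / (k.factorial : ℝ) with hE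
  have hEbound : ∀ j ∈ Finset.range (i + 1), |E j| ≤ M * ((j : ℝ) * τ) ^ (i + 2) := by
    intro j hj
    have h := hM (t - (j : ℝ) * τ) (hmemj j hj)
    have e1 : ∀ k : ℕ, (t - (j : ℝ) * τ - t) ^ k = (-(j : ℝ)) ^ k * τ ^ k := by
      intro k
      rw [← mul_pow]
      congr 1
      ring
    have e2 : t - (t - (j : ℝ) * τ) = (j : ℝ) * τ := by ring
    rw [e2] at h
    have e4 : ∑ k ∈ Finset.range (i + 1 + 1),
        iteratedDerivWithin k ξ S t * ((-(j : ℝ)) ^ k * τ ^ k) / (k.factorial : ℝ)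
        = ∑ k ∈ Finset.range (i + 1 + 1),
        iteratedDerivWithin k ξ S t * (t - (j : ℝ) * τ - t) ^ k / (k.factorial : ℝ) :=
      Finset.sum_congr rfl fun k _ => by rw [e1 k]
    simp only [hE]
    rw [e4]
    exact h
  -- the main sum identity
  have hsum : ∑ j ∈ Finset.range (i + 1), (-1 : ℝ) ^ j * (i.choose j : ℝ) * ξ (t - j * τ)
      = d i * τ ^ i + Sk (i + 1) * (d (i + 1) * τ ^ (i + 1) / ((i + 1).factorial : ℝ))
        + ∑ j ∈ Finset.range (i + 1), (-1 : ℝ) ^ j * (i.choose j : ℝ) * E j := by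
    have step1 : ∑ j ∈ Finset.range (i + 1), (-1 : ℝ) ^ j * (i.choose j : ℝ) * ξ (t - j * τ)
        = (∑ j ∈ Finset.range (i + 1), ∑ k ∈ Finset.range (i + 1 + 1),
            (-1 : ℝ) ^ j * (i.choose j : ℝ) *
              (iteratedDerivWithin k ξ S t * ((-(j : ℝ)) ^ k * τ ^ k) / (k.factorial : ℝ)))
          + ∑ j ∈ Finset.range (i + 1), (-1 : ℝ) ^ j * (i.choose j : ℝ) * E j := by
      rw [← Finset.sum_add_distrib]
      refine Finset.sum_congr rfl fun j hj => ?_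
      have : ξ (t - (j : ℝ) * τ) = (∑ k ∈ Finset.range (i + 1 + 1),
          iteratedDerivWithin k ξ S t * ((-(j : ℝ)) ^ k * τ ^ k) / (k.factorial : ℝ)) + E j := by
        simp only [hE]; ring
      rw [this, mul_add]
      congr 1
      exact Finset.mul_sum _ _ _
    rw [step1]
    congr 1
    rw [Finset.sum_comm]
    have step2 : ∀ k ∈ Finset.range (i + 1 + 1),
        (∑ j ∈ Finset.range (i + 1),
          (-1 : ℝ) ^ j * (i.choose j : ℝ) *
            (iteratedDerivWithin k ξ S t * ((-(j : ℝ)) ^ k * τ ^ k) / (k.factorial : ℝ)))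
        = Sk k * (d k * τ ^ k / (k.factorial : ℝ)) := by
      intro k _
      rw [hSk, Finset.sum_mul]
      refine Finset.sum_congr rfl fun j _ => ?_
      ring
    rw [Finset.sum_congr rfl step2]
    rw [Finset.sum_range_succ, Finset.sum_range_succ]
    rw [Finset.sum_eq_zero fun k hk => by
      rw [hSk0 k (Finset.mem_range.mp hk), zero_mul]]
    rw [hSki, zero_add]
    congr 1
    have hfac : (i.factorial : ℝ) ≠ 0 := by exact_mod_cast i.factorial_ne_zero
    field_simp
  -- rewrite bdApprox
  have hzpow : τ ^ (-(i : ℤ)) = ((τ : ℝ) ^ i)⁻¹ := by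
    rw [zpow_neg, zpow_natCast]
  have hfac1 : (((i + 1).factorial : ℕ) : ℝ) ≠ 0 := by exact_mod_cast (i + 1).factorial_ne_zero
  have hbd : bdApprox ξ τ i t
      = d i + τ * (d (i + 1) / ((i + 1).factorial : ℝ) * Sk (i + 1))
        + (τ ^ i)⁻¹ * ∑ j ∈ Finset.range (i + 1), (-1 : ℝ) ^ j * (i.choose j : ℝ) * E j := by
    rw [bdApprox, hzpow, hsum]
    rw [mul_add, mul_add]
    congr 2
    · rw [mul_comm (d i), ← mul_assoc, inv_mul_cancel₀ hτi, one_mul]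
    · rw [pow_succ]
      field_simp
  -- final estimate
  have hdecomp : iteratedDerivWithin i ξ S t - bdApprox ξ τ i t
      = -(τ * (d (i + 1) / ((i + 1).factorial : ℝ) * Sk (i + 1)))
        - (τ ^ i)⁻¹ * ∑ j ∈ Finset.range (i + 1), (-1 : ℝ) ^ j * (i.choose j : ℝ) * E j := by
    rw [hbd]
    show d i - _ = _
    ring
  rw [hdecomp]
  have habs : |(-(τ * (d (i + 1) / ((i + 1).factorial : ℝ) * Sk (i + 1))))
        - (τ ^ i)⁻¹ * ∑ j ∈ Finset.range (i + 1), (-1 : ℝ) ^ j * (i.choose j : ℝ) * E j|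
      ≤ τ * |d (i + 1) / ((i + 1).factorial : ℝ) * Sk (i + 1)|
        + |(τ ^ i)⁻¹ * ∑ j ∈ Finset.range (i + 1), (-1 : ℝ) ^ j * (i.choose j : ℝ) * E j| := by
    refine le_trans (abs_sub _ _) ?_
    rw [abs_neg, abs_mul, abs_of_pos hτ0]
  refine le_trans habs ?_
  have hterm2 : |(τ ^ i)⁻¹ * ∑ j ∈ Finset.range (i + 1), (-1 : ℝ) ^ j * (i.choose j : ℝ) * E j|
      ≤ (M * ∑ j ∈ Finset.range (i + 1), (i.choose j : ℝ) * (j : ℝ) ^ (i + 2)) * τ ^ 2 := by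
    rw [abs_mul, abs_inv, abs_pow, abs_of_pos hτ0]
    have hZ : |∑ j ∈ Finset.range (i + 1), (-1 : ℝ) ^ j * (i.choose j : ℝ) * E j|
        ≤ ∑ j ∈ Finset.range (i + 1), (i.choose j : ℝ) * (M * ((j : ℝ) * τ) ^ (i + 2)) := by
      refine le_trans (Finset.abs_sum_le_sum_abs _ _) (Finset.sum_le_sum fun j hj => ?_)
      rw [abs_mul, abs_mul, abs_pow, abs_neg, abs_one, one_pow, one_mul, Nat.abs_cast]
      exact mul_le_mul_of_nonneg_left (hEbound j hj) (Nat.cast_nonneg _)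
    refine le_trans (mul_le_mul_of_nonneg_left hZ (by positivity)) (le_of_eq ?_)
    rw [Finset.mul_sum, Finset.mul_sum, Finset.sum_mul]
    refine Finset.sum_congr rfl fun j _ => ?_
    have e6 : ((j : ℝ) * τ) ^ (i + 2) = (j : ℝ) ^ (i + 2) * (τ ^ i * τ ^ 2) := by
      rw [mul_pow]
      ring
    rw [e6]
    field_simp
  have hterm1 : τ * |d (i + 1) / ((i + 1).factorial : ℝ) * Sk (i + 1)|
      = τ * |iteratedDerivWithin (i + 1) ξ S t / ((i + 1).factorial : ℝ) *
          ∑ j ∈ Finset.range (i + 1), (-1 : ℝ) ^ j * (i.choose j : ℝ) * (-(j : ℝ)) ^ (i + 1)| := rfl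
  rw [hterm1]
  exact add_le_add_right hterm2 _
end
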